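/- Let 𝓕 (with the norm ‖F‖ = sup_{[0,2)}|F| + sup_{[2,∞)}|F/x|) be as above, and define 𝓕_{NS2} = {F ∈ 𝓕 : the set S = {x > 0 : F(x) = 1/x} is nonempty and F(x) < 1/x for all x ∉ S, x > 0}, and 𝓕_{NS} = {F ∈ 𝓕 : ∃ x > 0, F(x) ≥ 1/x}. Then every F ∈ 𝓕_{NS2} lies in the topological boundary of 𝓕_{NS} in 𝓕: every ε-neighbourhood of F in 𝓕 contains both a function G₋ with G₋(x) < 1/x for all x > 0 and a function G₊ ∈ 𝓕_{NS1}. -/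

import Mathlib

def MemF (F : ℝ → ℝ) : Prop :=
  ContDiff ℝ 2 F ∧ F 0 = 1/2 ∧
  (∀ x ≥ (0:ℝ), deriv F x ≤ 0) ∧
  (∀ x ≥ (0:ℝ), deriv (deriv F) x ≥ 0) ∧
  (∀ x ≥ (0:ℝ), x^2 * deriv (deriv F) x + 2*x*deriv F x - 2*F x + 1 ≥ 0) ∧
  (∀ x ≥ (0:ℝ), 2*x*deriv F x - 2*F x + 1 ≥ 0) ∧
  (∀ x ≥ (0:ℝ), -(x^2 * deriv (deriv F) x) + 2*x*deriv F x - 2*F x + 1 ≥ 0)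

noncomputable def Fnorm (F : ℝ → ℝ) : ℝ :=
  sSup ((fun x => |F x|) '' Set.Ico (0:ℝ) 2) +
  sSup ((fun x => |F x / x|) '' Set.Ici (2:ℝ))

def NS1 (F : ℝ → ℝ) : Prop :=
  ∃ x₀ > (0:ℝ), ∃ x₁ > x₀, F x₀ = 1/x₀ ∧ F x₁ > 1/x₁

def CEN (F : ℝ → ℝ) : Prop := ∀ x > (0:ℝ), F x < 1/x

def CEN1 (F : ℝ → ℝ) : Prop :=
  CEN F ∧ ∃ xH > (0:ℝ), F xH = 0 ∧ ∀ x > xH, F x < 0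

lemma memF_diff {F : ℝ → ℝ} (hF : MemF F) : Differentiable ℝ F :=
  hF.1.differentiable (by norm_num)

lemma memF_diff_deriv {F : ℝ → ℝ} (hF : MemF F) : Differentiable ℝ (deriv F) := by
  have h2 : ContDiff ℝ (1+1) F := by exact_mod_cast hF.1
  exact ((contDiff_succ_iff_deriv.mp h2).2.2).differentiable (by norm_num)

lemma memF_anti {F : ℝ → ℝ} (hF : MemF F) : AntitoneOn F (Set.Ici 0) := by
  apply antitoneOn_of_deriv_nonpos (convex_Ici 0) (memF_diff hF).continuous.continuousOn
  · exact fun x _ => ((memF_diff hF) x).differentiableWithinAt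
  · intro x hx
    rw [interior_Ici] at hx
    exact hF.2.2.1 x hx.le

lemma memF_deriv_mono {F : ℝ → ℝ} (hF : MemF F) : MonotoneOn (deriv F) (Set.Ici 0) := by
  apply monotoneOn_of_deriv_nonneg (convex_Ici 0) (memF_diff_deriv hF).continuous.continuousOn
  · exact fun x _ => ((memF_diff_deriv hF) x).differentiableWithinAt
  · intro x hx
    rw [interior_Ici] at hx
    exact hF.2.2.2.1 x hx.le

lemma memF_le_half {F : ℝ → ℝ} (hF : MemF F) {x : ℝ} (hx : 0 ≤ x) : F x ≤ 1/2 := by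
  have := memF_anti hF (Set.self_mem_Ici) hx hx
  rw [hF.2.1] at this; exact this

lemma memF_lower {F : ℝ → ℝ} (hF : MemF F) {x : ℝ} (hx : 0 ≤ x) :
    1/2 + deriv F 0 * x ≤ F x := by
  have hgd : ∀ y : ℝ, HasDerivAt (fun y => F y - deriv F 0 * y) (deriv F y - deriv F 0) y := by
    intro y
    exact ((memF_diff hF y).hasDerivAt).sub
      (by simpa using (hasDerivAt_id y).const_mul (deriv F 0))
  have hmono : MonotoneOn (fun y => F y - deriv F 0 * y) (Set.Ici 0) := by
    apply monotoneOn_of_deriv_nonneg (convex_Ici 0)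
    · exact (Continuous.sub (memF_diff hF).continuous (by continuity)).continuousOn
    · exact fun y _ => ((hgd y).differentiableAt).differentiableWithinAt
    · intro y hy
      rw [interior_Ici] at hy
      rw [(hgd y).deriv]
      have := memF_deriv_mono hF (Set.self_mem_Ici) (Set.mem_Ici.mpr hy.le) hy.le
      linarith
  have h := hmono (Set.self_mem_Ici) (Set.mem_Ici.mpr hx) hx
  simp only [hF.2.1, mul_zero, sub_zero] at h
  linarith

/-- A root of F x = 1/x must be > 2. -/
lemma root_gt_two {F : ℝ → ℝ} (hF : MemF F) (hle : ∀ x > (0:ℝ), F x ≤ 1/x)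
    {x₀ : ℝ} (hx₀ : 0 < x₀) (hroot : F x₀ = 1/x₀) : 2 < x₀ := by
  have h2 : 2 ≤ x₀ := by
    have h1 : F x₀ ≤ 1/2 := memF_le_half hF hx₀.le
    rw [hroot] at h1
    rw [div_le_div_iff₀ hx₀ two_pos] at h1
    linarith
  rcases lt_or_eq_of_le h2 with h | h
  · exact h
  exfalso
  -- x₀ = 2, so F 2 = 1/2 and F is constant 1/2 on [0,2]
  have hF2 : F 2 = 1/2 := by rw [h]; exact hroot
  have hconst : ∀ y ∈ Set.Icc (0:ℝ) 2, F y = 1/2 := by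
    intro y hy
    have h1 : F y ≤ F 0 := memF_anti hF Set.self_mem_Ici hy.1 hy.1
    have h2' : F 2 ≤ F y := memF_anti hF hy.1 (by norm_num) hy.2
    rw [hF.2.1] at h1; rw [hF2] at h2'
    linarith
  -- hence deriv F 1 = 0
  have hd1 : deriv F 1 = 0 := by
    have hmem : Set.Ioo (0:ℝ) 2 ∈ nhds 1 := Ioo_mem_nhds (by norm_num) (by norm_num)
    have hev : F =ᶠ[nhds 1] fun _ => (1/2 : ℝ) :=
      Filter.eventuallyEq_of_mem hmem (fun y hy => hconst y ⟨hy.1.le, hy.2.le⟩)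
    rw [hev.deriv_eq, deriv_const]
  -- deriv F = 0 on [1,∞), so F monotone there
  have hdz : ∀ y ≥ (1:ℝ), deriv F y = 0 := by
    intro y hy
    have hmono := memF_deriv_mono hF (Set.mem_Ici.mpr (by norm_num : (0:ℝ) ≤ 1))
      (Set.mem_Ici.mpr (by linarith : (0:ℝ) ≤ y)) hy
    have hnp := hF.2.2.1 y (by linarith)
    rw [hd1] at hmono
    linarith
  have hmono : MonotoneOn F (Set.Ici 1) := by
    apply monotoneOn_of_deriv_nonneg (convex_Ici 1) (memF_diff hF).continuous.continuousOn
    · exact fun y _ => ((memF_diff hF) y).differentiableWithinAt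
    · intro y hy
      rw [interior_Ici] at hy
      rw [hdz y hy.le]
  have hF4 : F 1 ≤ F 4 := hmono Set.self_mem_Ici (by norm_num) (by norm_num)
  have hF1 : F 1 = 1/2 := hconst 1 (by norm_num)
  have h4 := hle 4 (by norm_num)
  rw [hF1] at hF4
  norm_num at h4
  linarith

theorem stmt_9 (F : ℝ → ℝ) (hF : MemF F)
    (hNS2 : (∃ x > (0:ℝ), F x = 1/x) ∧ ∀ x > (0:ℝ), F x ≠ 1/x → F x < 1/x)
    (ε : ℝ) (hε : 0 < ε) :
    (∃ Gm : ℝ → ℝ, MemF Gm ∧ (∀ x > (0:ℝ), Gm x < 1/x) ∧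
      Fnorm (fun x => F x - Gm x) < ε) ∧
    (∃ Gp : ℝ → ℝ, MemF Gp ∧ NS1 Gp ∧ Fnorm (fun x => F x - Gp x) < ε) := by
  obtain ⟨⟨x₀, hx₀pos, hroot⟩, hlt⟩ := hNS2
  have hle : ∀ x > (0:ℝ), F x ≤ 1/x := by
    intro x hx
    by_cases h : F x = 1/x
    · exact le_of_eq h
    · exact (hlt x hx h).le
  constructor
  · -- G₋ = F - c x  with c = ε/4
    set c : ℝ := ε/4 with hc
    have hcpos : 0 < c := by positivity
    have hd1 : deriv (fun x => F x - c * x) = fun x => deriv F x - c := by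
      funext x
      exact (((memF_diff hF x).hasDerivAt).sub
        (by simpa using (hasDerivAt_id x).const_mul c)).deriv
    have hd2 : deriv (deriv (fun x => F x - c * x)) = deriv (deriv F) := by
      rw [hd1]; funext x; exact deriv_sub_const c
    refine ⟨fun x => F x - c * x, ?_, ?_, ?_⟩
    · -- MemF
      refine ⟨hF.1.sub (contDiff_const.mul contDiff_id), by simp [hF.2.1], ?_, ?_, ?_, ?_, ?_⟩
      · intro x hx; rw [hd1]; have := hF.2.2.1 x hx; simp only; linarith
      · intro x hx; rw [hd2]; exact hF.2.2.2.1 x hx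
      · intro x hx; rw [hd2, hd1]
        have := hF.2.2.2.2.1 x hx; simp only; nlinarith
      · intro x hx; rw [hd1]
        have := hF.2.2.2.2.2.1 x hx; simp only; nlinarith
      · intro x hx; rw [hd2, hd1]
        have := hF.2.2.2.2.2.2 x hx; simp only; nlinarith
    · intro x hx
      have hcx : c * x > 0 := by positivity
      have := hle x hx
      simp only
      linarith
    · -- norm bound
      unfold Fnorm
      have b1 : sSup ((fun x => |F x - (F x - c * x)|) '' Set.Ico (0:ℝ) 2) ≤ 2*c := by
        apply Real.sSup_le
        · rintro y ⟨x, hx, rfl⟩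
          simp only
          rw [show F x - (F x - c * x) = c * x by ring,
            abs_of_nonneg (mul_nonneg hcpos.le hx.1)]
          nlinarith [hx.1, hx.2]
        · positivity
      have b2 : sSup ((fun x => |(F x - (F x - c * x)) / x|) '' Set.Ici (2:ℝ)) ≤ c := by
        apply Real.sSup_le
        · rintro y ⟨x, hx, rfl⟩
          simp only
          have hxpos : (0:ℝ) < x := lt_of_lt_of_le two_pos hx
          rw [show F x - (F x - c * x) = c * x by ring, mul_div_assoc,
            div_self (ne_of_gt hxpos), mul_one, abs_of_nonneg hcpos.le]
        · exact hcpos.le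
      have : (2:ℝ)*c + c < ε := by rw [hc]; linarith
      beta_reduce
      linarith
  · -- G₊ = k F + (1-k)/2
    have hx₀2 : 2 < x₀ := root_gt_two hF hle hx₀pos hroot
    set B : ℝ := -(deriv F 0) with hB
    have hBnn : 0 ≤ B := by
      have := hF.2.2.1 0 le_rfl
      simp [hB]; linarith
    set δ : ℝ := min (1/2) (ε/(3*B+3)) with hδ
    have hδpos : 0 < δ := lt_min (by norm_num) (div_pos hε (by linarith))
    have hδhalf : δ ≤ 1/2 := min_le_left _ _
    set k : ℝ := 1 - δ with hk
    have hkpos : 0 < k := by rw [hk]; linarith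
    have hklt : k < 1 := by rw [hk]; linarith
    have hd1 : deriv (fun x => k * F x + (1-k)/2) = fun x => k * deriv F x := by
      funext x
      exact ((((memF_diff hF x).hasDerivAt).const_mul k).add_const ((1-k)/2)).deriv
    have hd2 : deriv (deriv (fun x => k * F x + (1-k)/2)) = fun x => k * deriv (deriv F) x := by
      rw [hd1]; funext x
      exact (((memF_diff_deriv hF x).hasDerivAt).const_mul k).deriv
    have hmemG : MemF (fun x => k * F x + (1-k)/2) := by
      refine ⟨(contDiff_const.mul hF.1).add contDiff_const,
        by simp [hF.2.1]; ring, ?_, ?_, ?_, ?_, ?_⟩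
      · intro x hx; rw [hd1]
        have := hF.2.2.1 x hx; simp only
        exact mul_nonpos_of_nonneg_of_nonpos hkpos.le this
      · intro x hx; rw [hd2]
        have := hF.2.2.2.1 x hx; simp only
        positivity
      · intro x hx; rw [hd2, hd1]
        have := hF.2.2.2.2.1 x hx; simp only; nlinarith
      · intro x hx; rw [hd1]
        have := hF.2.2.2.2.2.1 x hx; simp only; nlinarith
      · intro x hx; rw [hd2, hd1]
        have := hF.2.2.2.2.2.2 x hx; simp only; nlinarith
    refine ⟨fun x => k * F x + (1-k)/2, hmemG, ?_, ?_⟩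
    · -- NS1
      have hGx₀ : k * F x₀ + (1-k)/2 > 1/x₀ := by
        rw [hroot]
        have h1 : 1/x₀ < 1/2 := by
          rw [div_lt_div_iff₀ hx₀pos two_pos]; linarith
        nlinarith
      have hG1 : k * F 1 + (1-k)/2 < 1/1 := by
        have h1 : F 1 ≤ 1/2 := memF_le_half hF (by norm_num)
        nlinarith
      -- IVT on [1, x₀]
      have hcont : ContinuousOn (fun x => (k * F x + (1-k)/2) - 1/x) (Set.Icc 1 x₀) := by
        apply ContinuousOn.sub
        · exact ((continuous_const.mul (memF_diff hF).continuous).add continuous_const).continuousOn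
        · apply ContinuousOn.div continuousOn_const continuousOn_id
          intro x hx
          have : (0:ℝ) < x := lt_of_lt_of_le one_pos hx.1
          exact ne_of_gt this
      have h0mem : (0:ℝ) ∈ Set.Ioo ((k * F 1 + (1-k)/2) - 1/1) ((k * F x₀ + (1-k)/2) - 1/x₀) :=
        ⟨by linarith, by linarith⟩
      obtain ⟨c, hcmem, hceq⟩ := intermediate_value_Ioo (by linarith : (1:ℝ) ≤ x₀) hcont h0mem
      refine ⟨c, by linarith [hcmem.1], x₀, hcmem.2, ?_, ?_⟩
      · simp only at hceq ⊢
        linarith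
      · simp only
        linarith
    · -- norm bound
      have hbd : ∀ x : ℝ, 0 ≤ x → |F x - (k * F x + (1-k)/2)| ≤ δ * (B * x) := by
        intro x hx
        have h1 : F x ≤ 1/2 := memF_le_half hF hx
        have h2 : 1/2 - B * x ≤ F x := by
          have := memF_lower hF hx
          rw [hB]; linarith
        rw [show F x - (k * F x + (1-k)/2) = δ * (F x - 1/2) by rw [hk]; ring]
        rw [abs_mul, abs_of_nonneg hδpos.le]
        apply mul_le_mul_of_nonneg_left _ hδpos.le
        rw [abs_le]
        constructor <;> nlinarith
      unfold Fnorm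
      have b1 : sSup ((fun x => |F x - (k * F x + (1-k)/2)|) '' Set.Ico (0:ℝ) 2) ≤ δ*(2*B) := by
        apply Real.sSup_le
        · rintro y ⟨x, hx, rfl⟩
          simp only
          have h1 := hbd x hx.1
          have hδB : 0 ≤ δ * B := mul_nonneg hδpos.le hBnn
          calc |F x - (k * F x + (1-k)/2)| ≤ δ * (B * x) := h1
            _ = (δ*B)*x := by ring
            _ ≤ (δ*B)*2 := mul_le_mul_of_nonneg_left hx.2.le hδB
            _ = δ*(2*B) := by ring
        · positivity
      have b2 : sSup ((fun x => |(F x - (k * F x + (1-k)/2)) / x|) '' Set.Ici (2:ℝ)) ≤ δ*B := by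
        apply Real.sSup_le
        · rintro y ⟨x, hx, rfl⟩
          simp only
          have hxpos : (0:ℝ) < x := lt_of_lt_of_le two_pos hx
          rw [abs_div, abs_of_pos hxpos, div_le_iff₀ hxpos]
          have := hbd x hxpos.le
          nlinarith [hδpos.le, hBnn]
        · positivity
      have hfin : δ*(2*B) + δ*B < ε := by
        have hδle : δ ≤ ε/(3*B+3) := min_le_right _ _
        have h3 : (0:ℝ) < 3*B+3 := by linarith
        have : δ * (3*B) ≤ (ε/(3*B+3)) * (3*B) := by
          apply mul_le_mul_of_nonneg_right hδle (by linarith)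
        have hlt2 : (ε/(3*B+3)) * (3*B) < ε := by
          rw [div_mul_eq_mul_div, div_lt_iff₀ h3]
          nlinarith
        calc δ*(2*B) + δ*B = δ*(3*B) := by ring
          _ ≤ (ε/(3*B+3)) * (3*B) := this
          _ < ε := hlt2
      beta_reduce
      exact lt_of_le_of_lt (add_le_add b1 b2) hfin
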